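/- Let Q₀, Q₁ be probability measures with Q₁ ≪ P, Q₁ restricted to F_s equal to P restricted to F_s, and (dQ₁/dP) ∈ L²(F_t) of the form 1 + h with E[h | F_s] = 0 and E[h² | F_s] ≤ δ₁², and similarly Q₂ on F_u ⊇ F_t with density relative to F_t of the form 1 + h' where E[h' | F_t] = 0 and E[h'² | F_t] ≤ δ₂². Then the composed (pasted) measure Q defined by dQ/dP = (1+h)(1+h') satisfies dQ/dP = 1 + H with E[H | F_s] = 0 and E[H² | F_s] ≤ (δ₁δ₂ + δ₁ + δ₂)². -/

import Mathlib

open MeasureTheory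
open scoped ENNReal


lemma aux_mul_int {Ω : Type*} {m0 : MeasurableSpace Ω} {P : Measure Ω} {f g : Ω → ℝ}
    (hf : MemLp f 2 P) (hg : MemLp g 2 P) : Integrable (fun ω => f ω * g ω) P := by
  refine (hf.integrable_sq.add hg.integrable_sq).mono'
    (hf.aestronglyMeasurable.mul hg.aestronglyMeasurable) ?_
  filter_upwards with ω
  simp only [Pi.add_apply]
  rw [Real.norm_eq_abs, abs_mul]
  nlinarith [sq_nonneg (|f ω| - |g ω|), sq_abs (f ω), sq_abs (g ω), abs_nonneg (f ω),
    abs_nonneg (g ω)]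

/-- If `E[g²|mt] ≤ c` a.e. and `f` is `mt`-measurable and square integrable, then
`f² g²` is integrable. -/
lemma aux_sq_mul_int {Ω : Type*} {m0 : MeasurableSpace Ω} {P : Measure Ω}
    [IsProbabilityMeasure P] {mt : MeasurableSpace Ω} (hmt : mt ≤ m0) {f g : Ω → ℝ}
    (hfm : Measurable[mt] f) (hgm : Measurable[m0] g) (hf2 : MemLp f 2 P) (hg2 : MemLp g 2 P)
    {c : ℝ} (hvar : P[fun ω => g ω ^ 2 | mt] ≤ᵐ[P] fun _ => c) :
    Integrable (fun ω => f ω ^ 2 * g ω ^ 2) P := by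
  have hfm0 : Measurable[m0] f := hfm.mono hmt le_rfl
  set gn : ℕ → Ω → ℝ := fun n ω => min (g ω ^ 2) n with hgn
  have hgn_meas : ∀ n, Measurable[m0] (gn n) := fun n => (hgm.pow_const 2).min measurable_const
  have hgn_nonneg : ∀ n ω, 0 ≤ gn n ω := fun n ω => le_min (sq_nonneg _) (Nat.cast_nonneg n)
  have hgn_le : ∀ n ω, gn n ω ≤ g ω ^ 2 := fun n ω => min_le_left _ _
  have hgn_int : ∀ n, Integrable (gn n) P := by
    intro n
    refine hg2.integrable_sq.mono'
      ((hgn_meas n).aestronglyMeasurable : AEStronglyMeasurable[m0] (gn n) P) ?_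
    filter_upwards with ω
    rw [Real.norm_eq_abs, abs_of_nonneg (hgn_nonneg n ω)]
    exact hgn_le n ω
  have hfgn_int : ∀ n, Integrable (fun ω => f ω ^ 2 * gn n ω) P := by
    intro n
    refine (hf2.integrable_sq.mul_const (n : ℝ)).mono'
      ((((hfm0.pow_const 2).mul (hgn_meas n)).aestronglyMeasurable :
        AEStronglyMeasurable[m0] _ P)) ?_
    filter_upwards with ω
    rw [Real.norm_eq_abs, abs_mul, abs_of_nonneg (sq_nonneg (f ω)),
      abs_of_nonneg (hgn_nonneg n ω)]
    exact mul_le_mul_of_nonneg_left (min_le_right _ _) (sq_nonneg _)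
  have hpull : ∀ n, P[fun ω => f ω ^ 2 * gn n ω | mt]
      =ᵐ[P] fun ω => f ω ^ 2 * (P[gn n | mt]) ω := by
    intro n
    exact condExp_mul_of_stronglyMeasurable_left ((hfm.pow_const 2).stronglyMeasurable)
      (hfgn_int n) (hgn_int n)
  have hcond_le : ∀ n, P[gn n | mt] ≤ᵐ[P] fun _ => c := by
    intro n
    exact (condExp_mono (hgn_int n) hg2.integrable_sq
      (Filter.Eventually.of_forall fun ω => hgn_le n ω)).trans hvar
  have hcond_nn : ∀ n, 0 ≤ᵐ[P] P[gn n | mt] := fun n =>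
    condExp_nonneg (Filter.Eventually.of_forall fun ω => hgn_nonneg n ω)
  have hfin_int : ∀ n, Integrable (fun ω => f ω ^ 2 * (P[gn n | mt]) ω) P := by
    intro n
    refine (hf2.integrable_sq.mul_const c).mono'
      (((hfm0.pow_const 2).aestronglyMeasurable :
          AEStronglyMeasurable[m0] _ P).mul
        (((stronglyMeasurable_condExp.mono hmt).aestronglyMeasurable :
          AEStronglyMeasurable[m0] _ P))) ?_
    filter_upwards [hcond_le n, hcond_nn n] with ω h1 h2
    rw [Real.norm_eq_abs, abs_mul, abs_of_nonneg (sq_nonneg (f ω)), abs_of_nonneg h2]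
    exact mul_le_mul_of_nonneg_left h1 (sq_nonneg _)
  have hint_le : ∀ n, ∫ ω, f ω ^ 2 * gn n ω ∂P ≤ c * ∫ ω, f ω ^ 2 ∂P := by
    intro n
    calc ∫ ω, f ω ^ 2 * gn n ω ∂P = ∫ ω, (P[fun ω => f ω ^ 2 * gn n ω | mt]) ω ∂P :=
          (integral_condExp hmt).symm
      _ = ∫ ω, f ω ^ 2 * (P[gn n | mt]) ω ∂P := integral_congr_ae (hpull n)
      _ ≤ ∫ ω, c * f ω ^ 2 ∂P := by
          refine integral_mono_ae (hfin_int n) (hf2.integrable_sq.const_mul c) ?_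
          filter_upwards [hcond_le n] with ω h1
          rw [mul_comm c]
          exact mul_le_mul_of_nonneg_left h1 (sq_nonneg _)
      _ = c * ∫ ω, f ω ^ 2 ∂P := integral_const_mul c _
  refine ⟨(((hfm0.pow_const 2).mul (hgm.pow_const 2)).aestronglyMeasurable :
    AEStronglyMeasurable[m0] _ P), ?_⟩
  rw [hasFiniteIntegral_iff_ofReal (Filter.Eventually.of_forall fun ω =>
    mul_nonneg (sq_nonneg _) (sq_nonneg _))]
  have hptw : ∀ ω, (⨆ n, ENNReal.ofReal (f ω ^ 2 * gn n ω))
      = ENNReal.ofReal (f ω ^ 2 * g ω ^ 2) := by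
    intro ω
    refine le_antisymm (iSup_le fun n => ENNReal.ofReal_le_ofReal
      (mul_le_mul_of_nonneg_left (hgn_le n ω) (sq_nonneg _))) ?_
    refine le_iSup_of_le ⌈g ω ^ 2⌉₊ ?_
    have : gn ⌈g ω ^ 2⌉₊ ω = g ω ^ 2 := min_eq_left (Nat.le_ceil _)
    rw [this]
  calc ∫⁻ ω, ENNReal.ofReal (f ω ^ 2 * g ω ^ 2) ∂P
      = ∫⁻ ω, ⨆ n, ENNReal.ofReal (f ω ^ 2 * gn n ω) ∂P := by
        exact lintegral_congr fun ω => (hptw ω).symm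
    _ = ⨆ n, ∫⁻ ω, ENNReal.ofReal (f ω ^ 2 * gn n ω) ∂P := by
        refine lintegral_iSup (fun n => ENNReal.measurable_ofReal.comp
          ((hfm0.pow_const 2).mul (hgn_meas n))) ?_
        intro n m hnm ω
        refine ENNReal.ofReal_le_ofReal (mul_le_mul_of_nonneg_left ?_ (sq_nonneg _))
        exact min_le_min le_rfl (Nat.cast_le.mpr hnm)
    _ ≤ ENNReal.ofReal (c * ∫ ω, f ω ^ 2 ∂P) := by
        refine iSup_le fun n => ?_
        rw [← ofReal_integral_eq_lintegral_ofReal (hfgn_int n)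
          (Filter.Eventually.of_forall fun ω => mul_nonneg (sq_nonneg _) (hgn_nonneg n ω))]
        exact ENNReal.ofReal_le_ofReal (hint_le n)
    _ < ⊤ := ENNReal.ofReal_lt_top


/-- pasting of no-good-deal densities. If `dQ₁/dP = 1 + h` with
`E[h|F_s] = 0`, `E[h²|F_s] ≤ δ₁²` and the `F_t`-density of `Q₂` is `1 + h'`
with `E[h'|F_t] = 0`, `E[h'²|F_t] ≤ δ₂²`, then the pasted density
`(1+h)(1+h') = 1 + H` satisfies `E[H|F_s] = 0` and
`E[H²|F_s] ≤ (δ₁δ₂ + δ₁ + δ₂)²`. -/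
theorem stmt10 {Ω : Type*} {m0 : MeasurableSpace Ω} (P : Measure Ω) [IsProbabilityMeasure P]
    (ms mt mu : MeasurableSpace Ω) (hst : ms ≤ mt) (htu : mt ≤ mu) (hu : mu ≤ m0)
    (h h' : Ω → ℝ) (hhm : Measurable[mt] h) (hh'm : Measurable[mu] h')
    (hh2 : MemLp h 2 P) (hh'2 : MemLp h' 2 P)
    (δ₁ δ₂ : ℝ) (hδ₁ : 0 ≤ δ₁) (hδ₂ : 0 ≤ δ₂)
    (hce1 : P[h | ms] =ᵐ[P] 0)
    (hvar1 : P[fun ω => h ω ^ 2 | ms] ≤ᵐ[P] fun _ => δ₁ ^ 2)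
    (hce2 : P[h' | mt] =ᵐ[P] 0)
    (hvar2 : P[fun ω => h' ω ^ 2 | mt] ≤ᵐ[P] fun _ => δ₂ ^ 2)
    (H : Ω → ℝ) (hH : H = fun ω => h ω + h' ω + h ω * h' ω) :
    (∀ ω, (1 + h ω) * (1 + h' ω) = 1 + H ω) ∧
    P[H | ms] =ᵐ[P] 0 ∧
    P[fun ω => H ω ^ 2 | ms] ≤ᵐ[P] fun _ => (δ₁ * δ₂ + δ₁ + δ₂) ^ 2 := by
  have hmt0 : mt ≤ m0 := htu.trans hu
  have hms0 : ms ≤ m0 := hst.trans hmt0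
  have hhm0 : Measurable[m0] h := hhm.mono hmt0 le_rfl
  have hh'm0 : Measurable[m0] h' := hh'm.mono hu le_rfl
  have ih : Integrable h P := hh2.integrable one_le_two
  have ih' : Integrable h' P := hh'2.integrable one_le_two
  have ih2 : Integrable (fun ω => h ω ^ 2) P := hh2.integrable_sq
  have ih'2 : Integrable (fun ω => h' ω ^ 2) P := hh'2.integrable_sq
  have ihh' : Integrable (fun ω => h ω * h' ω) P := aux_mul_int hh2 hh'2
  have i22 : Integrable (fun ω => h ω ^ 2 * h' ω ^ 2) P :=
    aux_sq_mul_int hmt0 hhm hh'm0 hh2 hh'2 hvar2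
  -- Part 1
  have part1 : ∀ ω, (1 + h ω) * (1 + h' ω) = 1 + H ω := by
    intro ω; rw [hH]; ring
  -- Part 2
  have hce2' : P[h' | ms] =ᵐ[P] 0 := by
    refine ((condExp_condExp_of_le hst hmt0).symm.trans ?_)
    calc P[P[h' | mt] | ms] =ᵐ[P] P[(0 : Ω → ℝ) | ms] := condExp_congr_ae hce2
      _ = 0 := condExp_zero
  have hpullhh' : P[h * h' | mt] =ᵐ[P] h * P[h' | mt] :=
    condExp_mul_of_stronglyMeasurable_left hhm.stronglyMeasurable ihh' ih'
  have hhh'0 : P[h * h' | mt] =ᵐ[P] 0 := by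
    refine hpullhh'.trans ?_
    filter_upwards [hce2] with ω e
    simp only [Pi.mul_apply, Pi.zero_apply] at e ⊢
    rw [e, mul_zero]
  have hce3' : P[h * h' | ms] =ᵐ[P] 0 := by
    refine ((condExp_condExp_of_le hst hmt0).symm.trans ?_)
    calc P[P[h * h' | mt] | ms] =ᵐ[P] P[(0 : Ω → ℝ) | ms] := condExp_congr_ae hhh'0
      _ = 0 := condExp_zero
  have hsplitH : H = (h + h') + h * h' := by
    funext ω; simp only [hH, Pi.add_apply, Pi.mul_apply]
  have part2 : P[H | ms] =ᵐ[P] 0 := by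
    rw [hsplitH]
    have e1 : P[(h + h') + h * h' | ms] =ᵐ[P] P[h + h' | ms] + P[h * h' | ms] :=
      condExp_add (ih.add ih') ihh' ms
    have e2 : P[h + h' | ms] =ᵐ[P] P[h | ms] + P[h' | ms] := condExp_add ih ih' ms
    filter_upwards [e1, e2, hce1, hce2', hce3'] with ω a1 a2 a3 a4 a5
    simp only [Pi.add_apply, Pi.zero_apply] at a1 a2 a3 a4 a5 ⊢
    rw [a1, a2, a3, a4, a5]; ring
  -- Part 3
  have iB : Integrable ((fun ω => (1 + h ω) ^ 2) * fun ω => h' ω ^ 2) P := by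
    have : Integrable (fun ω => 2 * h' ω ^ 2 + 2 * (h ω ^ 2 * h' ω ^ 2)) P :=
      (ih'2.const_mul 2).add (i22.const_mul 2)
    refine this.mono' ((((measurable_const.add hhm0).pow_const 2).mul
      (hh'm0.pow_const 2)).aestronglyMeasurable : AEStronglyMeasurable[m0] _ P) ?_
    filter_upwards with ω
    simp only [Pi.mul_apply]
    rw [Real.norm_eq_abs, abs_of_nonneg (by positivity)]
    nlinarith [sq_nonneg ((1 - h ω) * h' ω), sq_nonneg (h' ω)]
  have iC : Integrable ((fun ω => 2 * h ω * (1 + h ω)) * h') P := by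
    have : Integrable (fun ω => 2 * |h ω * h' ω| + (h ω ^ 2 + h ω ^ 2 * h' ω ^ 2)) P :=
      (ihh'.abs.const_mul 2).add (ih2.add i22)
    refine this.mono' (((((measurable_const.mul hhm0).mul
      (measurable_const.add hhm0))).mul hh'm0).aestronglyMeasurable :
        AEStronglyMeasurable[m0] _ P) ?_
    filter_upwards with ω
    simp only [Pi.mul_apply]
    rw [Real.norm_eq_abs]
    rw [abs_le]
    constructor
    · nlinarith [neg_abs_le (h ω * h' ω), sq_nonneg (h ω * (1 + h' ω))]
    · nlinarith [le_abs_self (h ω * h' ω), sq_nonneg (h ω * (1 - h' ω))]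
  have hsplit : (fun ω => H ω ^ 2) =
      ((fun ω => h ω ^ 2) + (fun ω => (1 + h ω) ^ 2) * fun ω => h' ω ^ 2) +
        (fun ω => 2 * h ω * (1 + h ω)) * h' := by
    funext ω
    simp only [hH, Pi.add_apply, Pi.mul_apply]
    ring
  set g₀ : Ω → ℝ :=
    ((1 + δ₂ ^ 2) • fun ω => h ω ^ 2) + ((2 * δ₂ ^ 2) • h) + fun _ => δ₂ ^ 2 with hg₀
  have ig₀ : Integrable g₀ P :=
    ((ih2.smul (1 + δ₂ ^ 2)).add (ih.smul (2 * δ₂ ^ 2))).add (integrable_const _)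
  have hF1 : P[fun ω => h ω ^ 2 | mt] = fun ω => h ω ^ 2 :=
    condExp_of_stronglyMeasurable hmt0 ((hhm.pow_const 2).stronglyMeasurable) ih2
  have hF2 : P[(fun ω => (1 + h ω) ^ 2) * fun ω => h' ω ^ 2 | mt]
      =ᵐ[P] (fun ω => (1 + h ω) ^ 2) * P[fun ω => h' ω ^ 2 | mt] :=
    condExp_mul_of_stronglyMeasurable_left
      (((measurable_const.add hhm).pow_const 2).stronglyMeasurable) iB ih'2
  have hF3 : P[(fun ω => 2 * h ω * (1 + h ω)) * h' | mt]
      =ᵐ[P] (fun ω => 2 * h ω * (1 + h ω)) * P[h' | mt] :=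
    condExp_mul_of_stronglyMeasurable_left
      (((measurable_const.mul hhm).mul (measurable_const.add hhm)).stronglyMeasurable) iC ih'
  have hbound : P[fun ω => H ω ^ 2 | mt] ≤ᵐ[P] g₀ := by
    rw [hsplit]
    have e1 := condExp_add (μ := P) (m := mt) (ih2.add iB) iC
    have e2 := condExp_add (μ := P) (m := mt) ih2 iB
    filter_upwards [e1, e2, hF2, hF3, hvar2, hce2] with ω a1 a2 a3 a4 a5 a6
    simp only [Pi.add_apply, Pi.mul_apply, Pi.zero_apply, Pi.smul_apply, smul_eq_mul,
      hg₀] at a1 a2 a3 a4 a6 ⊢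
    rw [a1, a2, a3, a4, hF1, a6]
    have a5' : (P[fun ω => h' ω ^ 2 | mt]) ω ≤ δ₂ ^ 2 := a5
    beta_reduce
    nlinarith [mul_le_mul_of_nonneg_left a5' (sq_nonneg (1 + h ω))]
  have htower : P[fun ω => H ω ^ 2 | ms] =ᵐ[P] P[P[fun ω => H ω ^ 2 | mt] | ms] :=
    (condExp_condExp_of_le hst hmt0).symm
  have hmono : P[P[fun ω => H ω ^ 2 | mt] | ms] ≤ᵐ[P] P[g₀ | ms] :=
    condExp_mono integrable_condExp ig₀ hbound
  have hL3 : P[g₀ | ms] =ᵐ[P]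
      (1 + δ₂ ^ 2) • P[fun ω => h ω ^ 2 | ms] + (2 * δ₂ ^ 2) • P[h | ms] + fun _ => δ₂ ^ 2 := by
    have e1 := condExp_add (μ := P) (m := ms)
      ((ih2.smul (1 + δ₂ ^ 2)).add (ih.smul (2 * δ₂ ^ 2))) (integrable_const (δ₂ ^ 2))
    have e2 := condExp_add (μ := P) (m := ms) (ih2.smul (1 + δ₂ ^ 2)) (ih.smul (2 * δ₂ ^ 2))
    have e3 := condExp_smul (μ := P) (m := ms) (1 + δ₂ ^ 2) (fun ω => h ω ^ 2)
    have e4 := condExp_smul (μ := P) (m := ms) (2 * δ₂ ^ 2) h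
    have e5 : P[(fun _ => δ₂ ^ 2 : Ω → ℝ) | ms] = fun _ => δ₂ ^ 2 := condExp_const hms0 _
    filter_upwards [e1, e2, e3, e4] with ω a1 a2 a3 a4
    simp only [Pi.add_apply, Pi.smul_apply, smul_eq_mul, hg₀] at a1 a2 a3 a4 ⊢
    rw [a1, a2, a3, a4, e5]
  have part3 : P[fun ω => H ω ^ 2 | ms] ≤ᵐ[P] fun _ => (δ₁ * δ₂ + δ₁ + δ₂) ^ 2 := by
    filter_upwards [htower, hmono, hL3, hvar1, hce1] with ω a1 a2 a3 a4 a5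
    rw [a1]
    refine a2.trans ?_
    simp only [Pi.add_apply, Pi.smul_apply, smul_eq_mul, Pi.zero_apply] at a3 a5 ⊢
    rw [a3, a5]
    have a4' : (P[fun ω => h ω ^ 2 | ms]) ω ≤ δ₁ ^ 2 := a4
    nlinarith [mul_le_mul_of_nonneg_left a4' (by positivity : (0:ℝ) ≤ 1 + δ₂ ^ 2),
      mul_nonneg hδ₁ hδ₂, mul_nonneg (mul_nonneg hδ₁ hδ₁) hδ₂,
      mul_nonneg (mul_nonneg hδ₁ hδ₂) hδ₂, sq_nonneg δ₂, sq_nonneg δ₁]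
  exact ⟨part1, part2, part3⟩
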